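/- Cancellation property for multipliers of products: Let E, F, G be Banach ideal spaces with G having the Fatou property. Then M(E ⊙ F, E ⊙ G) ≡ M(F, G) isometrically. -/

import Mathlib

open MeasureTheory

structure IdealSpace {α : Type*} [MeasurableSpace α] (μ : Measure α) where
  carrier : Set (α → ℝ)
  norm : (α → ℝ) → ℝ
  zero_mem : (0 : α → ℝ) ∈ carrier
  add_mem : ∀ {f g : α → ℝ}, f ∈ carrier → g ∈ carrier → f + g ∈ carrier
  smul_mem : ∀ (c : ℝ) {f : α → ℝ}, f ∈ carrier → c • f ∈ carrier
  norm_nonneg : ∀ f, 0 ≤ norm f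
  norm_eq_zero : ∀ f ∈ carrier, (norm f = 0 ↔ f =ᵐ[μ] 0)
  norm_add : ∀ f g, f ∈ carrier → g ∈ carrier → norm (f + g) ≤ norm f + norm g
  norm_smul : ∀ (c : ℝ) (f : α → ℝ), norm (c • f) = |c| * norm f
  ideal_mem : ∀ {f g : α → ℝ}, g ∈ carrier → (∀ᵐ a ∂μ, |f a| ≤ |g a|) → f ∈ carrier
  ideal_norm : ∀ {f g : α → ℝ}, g ∈ carrier → (∀ᵐ a ∂μ, |f a| ≤ |g a|) → norm f ≤ norm g
  weak_unit : ∃ w ∈ carrier, ∀ᵐ a ∂μ, 0 < w a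
  complete : ∀ x : ℕ → α → ℝ, (∀ n, x n ∈ carrier) →
    (∀ ε > 0, ∃ N, ∀ m ≥ N, ∀ n ≥ N, norm (x m - x n) < ε) →
    ∃ f ∈ carrier, Filter.Tendsto (fun n => norm (x n - f)) Filter.atTop (nhds 0)

variable {α : Type*} [MeasurableSpace α] {μ : Measure α}

namespace IdealSpace

variable (E : IdealSpace μ)

lemma norm_zero : E.norm 0 = 0 := by
  have h := E.norm_smul 0 0
  simpa using h

lemma mem_congr {f g : α → ℝ} (hg : g ∈ E.carrier) (h : f =ᵐ[μ] g) : f ∈ E.carrier :=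
  E.ideal_mem hg (h.mono fun a ha => by rw [ha])

lemma norm_congr {f g : α → ℝ} (hg : g ∈ E.carrier) (h : f =ᵐ[μ] g) : E.norm f = E.norm g :=
  le_antisymm (E.ideal_norm hg (h.mono fun a ha => by rw [ha]))
    (E.ideal_norm (E.mem_congr hg h) (h.mono fun a ha => by rw [ha]))

lemma mem_of_ae_zero {f : α → ℝ} (h : f =ᵐ[μ] 0) : f ∈ E.carrier :=
  E.mem_congr E.zero_mem h

lemma norm_of_ae_zero {f : α → ℝ} (h : f =ᵐ[μ] 0) : E.norm f = 0 := by
  rw [E.norm_congr E.zero_mem h, E.norm_zero]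

lemma abs_mem {f : α → ℝ} (hf : f ∈ E.carrier) : (fun a => |f a|) ∈ E.carrier :=
  E.ideal_mem hf (Filter.Eventually.of_forall fun a => by simp)

lemma norm_abs {f : α → ℝ} (hf : f ∈ E.carrier) : E.norm (fun a => |f a|) = E.norm f :=
  le_antisymm (E.ideal_norm hf (Filter.Eventually.of_forall fun a => by simp))
    (E.ideal_norm (E.abs_mem hf) (Filter.Eventually.of_forall fun a => by simp))

lemma neg_mem {f : α → ℝ} (hf : f ∈ E.carrier) : -f ∈ E.carrier := by
  have := E.smul_mem (-1) hf
  simpa using this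

lemma sub_mem {f g : α → ℝ} (hf : f ∈ E.carrier) (hg : g ∈ E.carrier) :
    f - g ∈ E.carrier := by
  have := E.add_mem hf (E.neg_mem hg)
  simpa [sub_eq_add_neg] using this

lemma norm_sum_le (f : ℕ → α → ℝ) (hf : ∀ n, f n ∈ E.carrier) (s : Finset ℕ) :
    E.norm (∑ i ∈ s, f i) ≤ ∑ i ∈ s, E.norm (f i) := by
  classical
  induction s using Finset.induction with
  | empty => simp [E.norm_zero]
  | @insert a s ha ih =>
    rw [Finset.sum_insert ha, Finset.sum_insert ha]
    refine le_trans (E.norm_add _ _ (hf a) ?_) (by linarith)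
    exact Finset.sum_induction f (· ∈ E.carrier) (fun _ _ => E.add_mem) E.zero_mem
      (fun i _ => hf i)

lemma sum_mem (f : ℕ → α → ℝ) (hf : ∀ n, f n ∈ E.carrier) (s : Finset ℕ) :
    (∑ i ∈ s, f i) ∈ E.carrier :=
  Finset.sum_induction f (· ∈ E.carrier) (fun _ _ => E.add_mem) E.zero_mem (fun i _ => hf i)

/-- Riesz–Fischer type lemma: a series of nonnegative functions with summable norms has
partial sums a.e. dominated by a single element of the space. -/
lemma rieszFischer (e : ℕ → α → ℝ) (hmem : ∀ n, e n ∈ E.carrier)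
    (hpos : ∀ n a, 0 ≤ e n a) (hsum : Summable fun n => E.norm (e n)) :
    ∃ S ∈ E.carrier, ∀ᵐ a ∂μ, ∀ n, ∑ k ∈ Finset.range n, e k a ≤ S a := by
  set P : ℕ → α → ℝ := fun n => ∑ k ∈ Finset.range n, e k with hP
  have hPmem : ∀ n, P n ∈ E.carrier := fun n => E.sum_mem e hmem _
  have hPapp : ∀ n a, P n a = ∑ k ∈ Finset.range n, e k a := by
    intro n a
    simp [hP]
  have hPmono : ∀ {m n : ℕ}, m ≤ n → ∀ a, P m a ≤ P n a := by
    intro m n hmn a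
    rw [hPapp, hPapp]
    exact Finset.sum_le_sum_of_subset_of_nonneg (Finset.range_subset_range.2 hmn)
      (fun i _ _ => hpos i a)
  have hcauchy : ∀ ε > 0, ∃ N, ∀ m ≥ N, ∀ n ≥ N, E.norm (P m - P n) < ε := by
    intro ε hε
    have hc : CauchySeq fun n => ∑ k ∈ Finset.range n, E.norm (e k) :=
      hsum.hasSum.tendsto_sum_nat.cauchySeq
    rcases Metric.cauchySeq_iff.1 hc ε hε with ⟨N, hN⟩
    refine ⟨N, fun m hm n hn => ?_⟩
    have key : ∀ {p q : ℕ}, q ≤ p → p ≥ N → q ≥ N → E.norm (P p - P q) < ε := by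
      intro p q hqp hp hq
      have hdiff : P p - P q = ∑ k ∈ Finset.Ico q p, e k := by
        funext a
        have h5 := Finset.sum_range_add_sum_Ico (fun k => e k a) hqp
        have h6 : (∑ k ∈ Finset.Ico q p, e k) a = ∑ k ∈ Finset.Ico q p, e k a := by
          simp
        simp only [Pi.sub_apply, hPapp, h6]
        linarith
      have h1 : E.norm (P p - P q) ≤ ∑ k ∈ Finset.Ico q p, E.norm (e k) := by
        rw [hdiff]; exact E.norm_sum_le e hmem _
      have h2 : ∑ k ∈ Finset.Ico q p, E.norm (e k)
          = (∑ k ∈ Finset.range p, E.norm (e k)) - ∑ k ∈ Finset.range q, E.norm (e k) := by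
        rw [← Finset.sum_range_add_sum_Ico (fun k => E.norm (e k)) hqp]
        ring
      have h3 := hN p hp q hq
      rw [Real.dist_eq] at h3
      have h4 : (∑ k ∈ Finset.range p, E.norm (e k)) - ∑ k ∈ Finset.range q, E.norm (e k)
          ≤ |(∑ k ∈ Finset.range p, E.norm (e k)) - ∑ k ∈ Finset.range q, E.norm (e k)| :=
        le_abs_self _
      linarith
    rcases le_total n m with h | h
    · exact key h hm hn
    · have : P m - P n = -(P n - P m) := by ring
      rw [this]
      have hneg : E.norm (-(P n - P m)) = E.norm (P n - P m) := by
        have := E.norm_smul (-1) (P n - P m)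
        simpa using this
      rw [hneg]
      exact key h hn hm
  rcases E.complete P hPmem hcauchy with ⟨S, hS, htend⟩
  refine ⟨S, hS, ?_⟩
  rw [MeasureTheory.ae_all_iff]
  intro n
  set q : α → ℝ := fun a => max (P n a - S a) 0 with hq
  have hqmem : q ∈ E.carrier := by
    refine E.ideal_mem (E.sub_mem (hPmem n) hS) ?_
    refine Filter.Eventually.of_forall fun a => ?_
    simp only [hq, Pi.sub_apply]
    rw [abs_of_nonneg (le_max_right _ _)]
    rcases le_total (P n a - S a) 0 with h | h
    · simp [max_eq_right h, abs_nonneg]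
    · rw [max_eq_left h]; exact le_abs_self _
  have hqnorm : ∀ m ≥ n, E.norm q ≤ E.norm (P m - S) := by
    intro m hm
    refine E.ideal_norm (E.sub_mem (hPmem m) hS) ?_
    refine Filter.Eventually.of_forall fun a => ?_
    simp only [hq, Pi.sub_apply]
    rw [abs_of_nonneg (le_max_right _ _)]
    rcases le_total (P n a - S a) 0 with h | h
    · simp [max_eq_right h, abs_nonneg]
    · rw [max_eq_left h]
      have := hPmono hm a
      have h2 : P n a - S a ≤ P m a - S a := by linarith
      exact le_trans h2 (le_abs_self _)
  have hq0 : E.norm q = 0 := by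
    have hle : E.norm q ≤ 0 :=
      ge_of_tendsto htend (Filter.eventually_atTop.2 ⟨n, fun m hm => hqnorm m hm⟩)
    exact le_antisymm hle (E.norm_nonneg q)
  have hae : q =ᵐ[μ] 0 := (E.norm_eq_zero q hqmem).1 hq0
  refine hae.mono fun a ha => ?_
  have : max (P n a - S a) 0 = 0 := ha
  have h7 := le_max_left (P n a - S a) 0
  rw [this] at h7
  have h8 := hPapp n a
  linarith

end IdealSpace

/-- The pointwise product space E ⊙ F. -/
def prodSet (E F : IdealSpace μ) : Set (α → ℝ) :=
  {z | ∃ x ∈ E.carrier, ∃ y ∈ F.carrier, z =ᵐ[μ] x * y}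

/-- The quasi-norm of the pointwise product space E ⊙ F. -/
noncomputable def prodNorm (E F : IdealSpace μ) (z : α → ℝ) : ℝ :=
  sInf {r | ∃ x ∈ E.carrier, ∃ y ∈ F.carrier, z =ᵐ[μ] x * y ∧ r = E.norm x * F.norm y}

/-- The Fatou property. -/
def HasFatou (E : IdealSpace μ) : Prop :=
  ∀ (x : ℕ → α → ℝ) (f : α → ℝ), (∀ n, x n ∈ E.carrier) →
    (∀ᵐ a ∂μ, ∀ n, 0 ≤ x n a ∧ x n a ≤ x (n + 1) a) →
    (∀ᵐ a ∂μ, Filter.Tendsto (fun n => x n a) Filter.atTop (nhds (f a))) →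
    (∃ C, ∀ n, E.norm (x n) ≤ C) →
    f ∈ E.carrier ∧ Filter.Tendsto (fun n => E.norm (x n)) Filter.atTop (nhds (E.norm f))

/-- The space of pointwise multipliers M(S, T): membership. -/
def multSet (S T : Set (α → ℝ)) : Set (α → ℝ) :=
  {x | ∀ y ∈ S, x * y ∈ T}

/-- The operator norm of a pointwise multiplier from (S, NS) to (·, NT). -/
noncomputable def multNorm (S : Set (α → ℝ)) (NS NT : (α → ℝ) → ℝ) (x : α → ℝ) : ℝ :=
  sSup {r | ∃ y ∈ S, NS y ≤ 1 ∧ r = NT (x * y)}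

namespace CancelAux

/-- Fatou-type limit lemma: a.e.-convergent (not necessarily monotone) nonnegative sequences
with uniformly bounded norms have their limit in the space, with norm bounded by the same
constant. -/
lemma fatou_limit (G : IdealSpace μ) (hG : HasFatou G) (u : ℕ → α → ℝ) (s : α → ℝ) (C : ℝ)
    (hmem : ∀ n, u n ∈ G.carrier) (hpos : ∀ n a, 0 ≤ u n a)
    (hconv : ∀ᵐ a ∂μ, Filter.Tendsto (fun n => u n a) Filter.atTop (nhds (s a)))
    (hbd : ∀ n, G.norm (u n) ≤ C) :
    s ∈ G.carrier ∧ G.norm s ≤ C := by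
  classical
  set v : ℕ → α → ℝ := fun n a => ⨅ k, u (n + k) a with hv
  have hbdd : ∀ n a, BddBelow (Set.range fun k => u (n + k) a) :=
    fun n a => ⟨0, by rintro r ⟨k, rfl⟩; exact hpos _ _⟩
  have hvpos : ∀ n a, 0 ≤ v n a := fun n a => le_ciInf fun k => hpos _ _
  have hvle : ∀ n k a, v n a ≤ u (n + k) a := fun n k a => ciInf_le (hbdd n a) k
  have hvleu : ∀ n a, v n a ≤ u n a := fun n a => by
    have := hvle n 0 a; simpa using this
  have hvmem : ∀ n, v n ∈ G.carrier := fun n =>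
    G.ideal_mem (hmem n) (Filter.Eventually.of_forall fun a => by
      rw [abs_of_nonneg (hvpos n a), abs_of_nonneg (hpos n a)]; exact hvleu n a)
  have hvnorm : ∀ n, G.norm (v n) ≤ C := fun n =>
    le_trans (G.ideal_norm (hmem n) (Filter.Eventually.of_forall fun a => by
      rw [abs_of_nonneg (hvpos n a), abs_of_nonneg (hpos n a)]; exact hvleu n a)) (hbd n)
  have hvmono : ∀ n a, v n a ≤ v (n + 1) a := by
    intro n a
    refine le_ciInf fun k => ?_
    have h1 : v n a ≤ u (n + (1 + k)) a := hvle n (1 + k) a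
    have h2 : n + (1 + k) = (n + 1) + k := by ring
    rwa [h2] at h1
  have hvconv : ∀ᵐ a ∂μ, Filter.Tendsto (fun n => v n a) Filter.atTop (nhds (s a)) := by
    refine hconv.mono fun a ha => ?_
    rw [Metric.tendsto_atTop]
    intro ε hε
    rcases (Metric.tendsto_atTop.1 ha) (ε / 2) (by linarith) with ⟨N, hN⟩
    refine ⟨N, fun n hn => ?_⟩
    have hub : v n a ≤ u n a := hvleu n a
    have h1 : u n a < s a + ε / 2 := by
      have := hN n hn; rw [Real.dist_eq] at this
      have := abs_lt.1 this; linarith [this.2]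
    have h2 : s a - ε / 2 ≤ v n a := by
      refine le_ciInf fun k => ?_
      have := hN (n + k) (le_trans hn (Nat.le_add_right n k))
      rw [Real.dist_eq] at this
      have := abs_lt.1 this; linarith [this.1]
    rw [Real.dist_eq, abs_lt]
    constructor <;> linarith
  have hfat := hG v s hvmem
    (Filter.Eventually.of_forall fun a n => ⟨hvpos n a, hvmono n a⟩) hvconv ⟨C, hvnorm⟩
  refine ⟨hfat.1, ?_⟩
  exact le_of_tendsto hfat.2 (Filter.Eventually.of_forall hvnorm)

section ProdLemmas

variable (E F G : IdealSpace μ)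

lemma prodSet_zero_mem : (0 : α → ℝ) ∈ prodSet E F := by
  refine ⟨0, E.zero_mem, 0, F.zero_mem, Filter.Eventually.of_forall fun a => ?_⟩
  simp

lemma prodNorm_nonneg (z : α → ℝ) : 0 ≤ prodNorm E F z := by
  refine Real.sInf_nonneg fun r hr => ?_
  rcases hr with ⟨e, he, f, hf, hz, rfl⟩
  exact mul_nonneg (E.norm_nonneg e) (F.norm_nonneg f)

lemma prodNorm_le {z e f : α → ℝ} (he : e ∈ E.carrier) (hf : f ∈ F.carrier)
    (hz : z =ᵐ[μ] e * f) : prodNorm E F z ≤ E.norm e * F.norm f :=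
  csInf_le ⟨0, fun r hr => by
    rcases hr with ⟨e', he', f', hf', hz', rfl⟩
    exact mul_nonneg (E.norm_nonneg e') (F.norm_nonneg f')⟩ ⟨e, he, f, hf, hz, rfl⟩

lemma prodNorm_zero : prodNorm E F 0 = 0 := by
  refine le_antisymm ?_ (prodNorm_nonneg E F 0)
  have h := prodNorm_le E F E.zero_mem F.zero_mem
    (z := 0) (Filter.Eventually.of_forall fun a => by simp)
  rwa [E.norm_zero, F.norm_zero, mul_zero] at h

lemma prodNorm_exists_lt {z : α → ℝ} (hz : z ∈ prodSet E F) {t : ℝ}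
    (ht : prodNorm E F z < t) :
    ∃ e ∈ E.carrier, ∃ f ∈ F.carrier, z =ᵐ[μ] e * f ∧ E.norm e * F.norm f < t := by
  rcases hz with ⟨e0, he0, f0, hf0, hz0⟩
  have hne : {r | ∃ x ∈ E.carrier, ∃ y ∈ F.carrier, z =ᵐ[μ] x * y ∧
      r = E.norm x * F.norm y}.Nonempty := ⟨_, e0, he0, f0, hf0, hz0, rfl⟩
  rcases exists_lt_of_csInf_lt hne ht with ⟨r, ⟨e, he, f, hf, hzz, rfl⟩, hrt⟩
  exact ⟨e, he, f, hf, hzz, hrt⟩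

/-- Solidity of the product space together with monotonicity of its quasinorm. -/
lemma prodNorm_mono {u v : α → ℝ} (hv : v ∈ prodSet E F)
    (h : ∀ᵐ a ∂μ, |u a| ≤ |v a|) :
    u ∈ prodSet E F ∧ prodNorm E F u ≤ prodNorm E F v := by
  classical
  have key : ∀ e ∈ E.carrier, ∀ f ∈ F.carrier, v =ᵐ[μ] e * f →
      ∃ f' ∈ F.carrier, u =ᵐ[μ] e * f' ∧ F.norm f' ≤ F.norm f := by
    intro e he f hf hev
    set f' : α → ℝ := fun a => if e a = 0 then 0 else u a / e a with hf'
    have hdom : ∀ᵐ a ∂μ, |f' a| ≤ |f a| := by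
      filter_upwards [h, hev] with a h1 h2
      by_cases hea : e a = 0
      · simp [hf', hea, abs_nonneg]
      · have : |f' a| = |u a| / |e a| := by
          simp [hf', hea, abs_div]
        rw [this]
        rw [div_le_iff₀ (abs_pos.2 hea)]
        calc |u a| ≤ |v a| := h1
        _ = |f a| * |e a| := by rw [h2, Pi.mul_apply, abs_mul]; ring
    have hmemf' : f' ∈ F.carrier := F.ideal_mem hf hdom
    refine ⟨f', hmemf', ?_, F.ideal_norm hf hdom⟩
    filter_upwards [h, hev] with a h1 h2
    by_cases hea : e a = 0
    · have hva : v a = 0 := by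
        have : v a = e a * f a := h2
        simp [this, hea]
      have : u a = 0 := by
        have := h1; rw [hva] at this; simpa using this
      simp [Pi.mul_apply, hf', hea, this]
    · simp [Pi.mul_apply, hf', hea]
      field_simp
  rcases hv with ⟨e, he, f, hf, hev⟩
  rcases key e he f hf hev with ⟨f', hf', huf', _⟩
  refine ⟨⟨e, he, f', hf', huf'⟩, ?_⟩
  refine le_csInf ⟨_, e, he, f, hf, hev, rfl⟩ ?_
  rintro r ⟨e1, he1, f1, hf1, hev1, rfl⟩
  rcases key e1 he1 f1 hf1 hev1 with ⟨f1', hf1', huf1', hn1⟩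
  calc prodNorm E F u ≤ E.norm e1 * F.norm f1' := prodNorm_le E F he1 hf1' huf1'
  _ ≤ E.norm e1 * F.norm f1 := by
      exact mul_le_mul_of_nonneg_left hn1 (E.norm_nonneg e1)

lemma prodNorm_congr {u v : α → ℝ} (h : u =ᵐ[μ] v) :
    prodNorm E F u = prodNorm E F v := by
  unfold prodNorm
  congr 1
  ext r
  constructor <;> rintro ⟨e, he, f, hf, hz, rfl⟩
  · exact ⟨e, he, f, hf, h.symm.trans hz, rfl⟩
  · exact ⟨e, he, f, hf, h.trans hz, rfl⟩

lemma prodSet_congr {u v : α → ℝ} (h : u =ᵐ[μ] v) (hv : v ∈ prodSet E F) :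
    u ∈ prodSet E F := by
  rcases hv with ⟨e, he, f, hf, hev⟩
  exact ⟨e, he, f, hf, h.trans hev⟩

lemma le_mul_csInf {S : Set ℝ} (hS : S.Nonempty) {A c : ℝ} (hc : 0 ≤ c)
    (h : ∀ r ∈ S, A ≤ c * r) : A ≤ c * sInf S := by
  rcases eq_or_lt_of_le hc with rfl | hc'
  · rcases hS with ⟨r, hr⟩; simpa using h r hr
  · have h1 : A / c ≤ sInf S := le_csInf hS (fun r hr => (div_le_iff₀ hc').2
      (by rw [mul_comm]; exact h r hr))
    calc A = c * (A / c) := by field_simp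
    _ ≤ c * sInf S := mul_le_mul_of_nonneg_left h1 (le_of_lt hc')

lemma prodSet_smul (c : ℝ) {w : α → ℝ} (hw : w ∈ prodSet E F) : c • w ∈ prodSet E F := by
  rcases hw with ⟨e, he, f, hf, hev⟩
  refine ⟨c • e, E.smul_mem c he, f, hf, ?_⟩
  filter_upwards [hev] with a ha
  simp only [Pi.smul_apply, Pi.mul_apply, smul_eq_mul] at *
  rw [ha]; ring

lemma prodNorm_not_mem {w : α → ℝ} (hw : w ∉ prodSet E F) : prodNorm E F w = 0 := by
  unfold prodNorm
  have : {r | ∃ x ∈ E.carrier, ∃ y ∈ F.carrier, w =ᵐ[μ] x * y ∧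
      r = E.norm x * F.norm y} = ∅ := by
    ext r
    simp only [Set.mem_setOf_eq, Set.mem_empty_iff_false, iff_false]
    rintro ⟨e, he, f, hf, hev, rfl⟩
    exact hw ⟨e, he, f, hf, hev⟩
  rw [this, Real.sInf_empty]

lemma prodNorm_smul_le (s : ℝ) (hs : 0 < s) (w : α → ℝ) :
    prodNorm E F (s • w) ≤ s * prodNorm E F w := by
  rcases em (w ∈ prodSet E F) with hw | hw
  · unfold prodNorm
    refine le_mul_csInf ?_ (le_of_lt hs) ?_
    · rcases hw with ⟨e, he, f, hf, hev⟩; exact ⟨_, e, he, f, hf, hev, rfl⟩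
    · rintro r ⟨e, he, f, hf, hev, rfl⟩
      have hfac : s • w =ᵐ[μ] (s • e) * f := by
        filter_upwards [hev] with a ha
        simp only [Pi.smul_apply, Pi.mul_apply, smul_eq_mul] at *
        rw [ha]; ring
      have hle := prodNorm_le E F (E.smul_mem s he) hf hfac
      rw [E.norm_smul, abs_of_pos hs] at hle
      unfold prodNorm at hle
      calc sInf _ ≤ s * E.norm e * F.norm f := hle
      _ = s * (E.norm e * F.norm f) := by ring
  · have h1 : s • w ∉ prodSet E F := by
      intro hmem
      have := prodSet_smul E F s⁻¹ hmem
      rw [smul_smul, inv_mul_cancel₀ (ne_of_gt hs), one_smul] at this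
      exact hw this
    rw [prodNorm_not_mem E F hw, prodNorm_not_mem E F h1, mul_zero]

lemma prodNorm_smul (s : ℝ) (hs : 0 < s) (w : α → ℝ) :
    prodNorm E F (s • w) = s * prodNorm E F w := by
  refine le_antisymm (prodNorm_smul_le E F s hs w) ?_
  have h1 := prodNorm_smul_le E F s⁻¹ (inv_pos.2 hs) (s • w)
  rw [smul_smul, inv_mul_cancel₀ (ne_of_gt hs), one_smul] at h1
  calc s * prodNorm E F w ≤ s * (s⁻¹ * prodNorm E F (s • w)) :=
    mul_le_mul_of_nonneg_left h1 (le_of_lt hs)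
  _ = prodNorm E F (s • w) := by field_simp

lemma bound_scale (x : α → ℝ) (c : ℝ) (hc : 0 ≤ c)
    (hbd : ∀ z ∈ prodSet E F, prodNorm E F z ≤ 1 → prodNorm E G (x * z) ≤ c) :
    ∀ z ∈ prodSet E F, prodNorm E G (x * z) ≤ c * prodNorm E F z := by
  intro z hz
  have key : ∀ t : ℝ, prodNorm E F z < t → prodNorm E G (x * z) ≤ c * t := by
    intro t ht
    have ht0 : 0 < t := lt_of_le_of_lt (prodNorm_nonneg E F z) ht
    have hz' : t⁻¹ • z ∈ prodSet E F := prodSet_smul E F _ hz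
    have hn : prodNorm E F (t⁻¹ • z) ≤ 1 := by
      rw [prodNorm_smul E F _ (inv_pos.2 ht0)]
      calc t⁻¹ * prodNorm E F z ≤ t⁻¹ * t :=
        mul_le_mul_of_nonneg_left (le_of_lt ht) (le_of_lt (inv_pos.2 ht0))
      _ = 1 := inv_mul_cancel₀ (ne_of_gt ht0)
    have hb := hbd _ hz' hn
    have heq : x * (t⁻¹ • z) = t⁻¹ • (x * z) := by
      funext a
      simp only [Pi.mul_apply, Pi.smul_apply, smul_eq_mul]
      ring
    rw [heq, prodNorm_smul E G _ (inv_pos.2 ht0)] at hb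
    calc prodNorm E G (x * z) = t * (t⁻¹ * prodNorm E G (x * z)) := by field_simp
    _ ≤ t * c := mul_le_mul_of_nonneg_left hb (le_of_lt ht0)
    _ = c * t := by ring
  rcases eq_or_lt_of_le hc with rfl | hc'
  · have := key (prodNorm E F z + 1) (by linarith)
    simpa using this
  · refine le_of_forall_pos_le_add fun ε hε => ?_
    have := key (prodNorm E F z + ε / c) (by
      have : 0 < ε / c := div_pos hε hc'
      linarith)
    calc prodNorm E G (x * z) ≤ c * (prodNorm E F z + ε / c) := this
    _ = c * prodNorm E F z + ε := by field_simp

/-- Truncation of `y` to the set where `x*y` is dominated by a multiple of `v`. -/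
noncomputable def trunc (x y v : α → ℝ) (n : ℕ) : α → ℝ :=
  fun a => if |x a * y a| ≤ (n + 1 : ℝ) * |v a| then y a else 0

lemma trunc_dom (x y v : α → ℝ) (n : ℕ) (a : α) : |trunc x y v n a| ≤ |y a| := by
  unfold trunc
  split
  · exact le_refl _
  · simp [abs_nonneg]

lemma trunc_mem_F (x y v : α → ℝ) {F : IdealSpace μ} (hy : y ∈ F.carrier) (n : ℕ) :
    trunc x y v n ∈ F.carrier :=
  F.ideal_mem hy (Filter.Eventually.of_forall fun a => trunc_dom x y v n a)

lemma trunc_norm_le (x y v : α → ℝ) {F : IdealSpace μ} (hy : y ∈ F.carrier) (n : ℕ) :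
    F.norm (trunc x y v n) ≤ F.norm y :=
  F.ideal_norm hy (Filter.Eventually.of_forall fun a => trunc_dom x y v n a)

lemma trunc_mul_eq (x y v : α → ℝ) (n : ℕ) (a : α) :
    x a * trunc x y v n a = if |x a * y a| ≤ (n + 1 : ℝ) * |v a| then x a * y a else 0 := by
  unfold trunc
  split <;> simp

lemma trunc_mul_mem_G (x y v : α → ℝ) {G : IdealSpace μ} (hv : v ∈ G.carrier) (n : ℕ) :
    x * trunc x y v n ∈ G.carrier := by
  refine G.ideal_mem (G.smul_mem (n + 1 : ℝ) (G.abs_mem hv)) ?_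
  refine Filter.Eventually.of_forall fun a => ?_
  rw [Pi.mul_apply, trunc_mul_eq]
  have hn1 : (0:ℝ) ≤ (n + 1 : ℝ) := by positivity
  split
  · rename_i hcond
    have habs : abs (((n:ℝ) + 1) * |v a|) = ((n:ℝ) + 1) * |v a| :=
      abs_of_nonneg (by positivity)
    rw [Pi.smul_apply, smul_eq_mul, habs]
    exact hcond
  · simp only [abs_zero, Pi.smul_apply, smul_eq_mul]
    positivity

/-- Gluing lemma: if all truncated products have norm at most `C`, then `x*y ∈ G`
with norm at most `C`. -/
lemma trunc_glue (G : IdealSpace μ) (hG : HasFatou G) (x y v : α → ℝ)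
    (hvmem : v ∈ G.carrier) (hvpos : ∀ᵐ a ∂μ, 0 < v a) (C : ℝ)
    (hC : ∀ n, G.norm (x * trunc x y v n) ≤ C) :
    x * y ∈ G.carrier ∧ G.norm (x * y) ≤ C := by
  set t : ℕ → α → ℝ := fun n a => |x a * trunc x y v n a| with hts
  have htmem : ∀ n, t n ∈ G.carrier := fun n =>
    G.abs_mem (trunc_mul_mem_G x y v hvmem n)
  have htval : ∀ n a, t n a = if |x a * y a| ≤ (n + 1 : ℝ) * |v a| then |x a * y a| else 0 := by
    intro n a
    rw [hts]
    simp only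
    rw [trunc_mul_eq]
    split <;> simp
  have htnorm : ∀ n, G.norm (t n) ≤ C := by
    intro n
    have heq : t n = fun a => |(x * trunc x y v n) a| := by
      funext a; simp only [hts, Pi.mul_apply]
    rw [heq, G.norm_abs (trunc_mul_mem_G (G := G) x y v hvmem n)]
    exact hC n
  have hmono : ∀ n a, 0 ≤ t n a ∧ t n a ≤ t (n + 1) a := by
    intro n a
    rw [htval, htval]
    constructor
    · split <;> simp [abs_nonneg] <;> positivity
    · split
      · rename_i hcond
        have hcond2 : |x a * y a| ≤ ((n:ℝ) + 1 + 1) * |v a| := by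
          nlinarith [abs_nonneg (v a)]
        rw [if_pos (by push_cast; linarith)]
      · split <;> simp [abs_nonneg] <;> positivity
  have hconv : ∀ᵐ a ∂μ, Filter.Tendsto (fun n => t n a) Filter.atTop
      (nhds (|x a * y a|)) := by
    refine hvpos.mono fun a hva => ?_
    have habs : 0 < |v a| := abs_pos.2 (ne_of_gt hva)
    rcases exists_nat_ge (|x a * y a| / |v a|) with ⟨N, hN⟩
    have hNd : |x a * y a| ≤ (N : ℝ) * |v a| := by
      rw [div_le_iff₀ habs] at hN
      linarith
    refine tendsto_atTop_of_eventually_const (i₀ := N) fun n hn => ?_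
    rw [htval, if_pos ?_]
    have : (N:ℝ) ≤ (n:ℝ) + 1 := by
      have := Nat.cast_le (α := ℝ) |>.2 hn
      push_cast at this ⊢
      linarith
    calc |x a * y a| ≤ (N : ℝ) * |v a| := hNd
    _ ≤ ((n:ℝ) + 1) * |v a| := by nlinarith [abs_nonneg (v a)]
  have hfat := hG t (fun a => |x a * y a|) htmem
    (Filter.Eventually.of_forall fun a n => hmono n a) hconv ⟨C, htnorm⟩
  have habsmem : (fun a => |x a * y a|) ∈ G.carrier := hfat.1
  have habsnorm : G.norm (fun a => |x a * y a|) ≤ C :=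
    le_of_tendsto hfat.2 (Filter.Eventually.of_forall htnorm)
  have hdom : ∀ᵐ a ∂μ, |(x * y) a| ≤ |(fun a => |x a * y a|) a| :=
    Filter.Eventually.of_forall fun a => by simp [Pi.mul_apply]
  exact ⟨G.ideal_mem habsmem hdom, le_trans (G.ideal_norm habsmem hdom) habsnorm⟩

/-- The multiplication by `x` is automatically bounded if it maps `E ⊙ F` into `E ⊙ G`. -/
lemma exists_bound (x : α → ℝ)
    (hx : x ∈ multSet (prodSet E F) (prodSet E G)) :
    ∃ c : ℝ, 0 ≤ c ∧ ∀ z ∈ prodSet E F, prodNorm E F z ≤ 1 → prodNorm E G (x * z) ≤ c := by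
  classical
  by_contra hcon
  push_neg at hcon
  have hstep : ∀ n : ℕ, ∃ e ∈ E.carrier, ∃ f ∈ F.carrier,
      (∀ a, 0 ≤ e a) ∧ (∀ a, 0 ≤ f a) ∧ E.norm e ≤ 2 * (2:ℝ)⁻¹ ^ n ∧
      F.norm f ≤ (2:ℝ)⁻¹ ^ n ∧ ((n:ℝ) + 1) < prodNorm E G (x * (e * f)) := by
    intro n
    obtain ⟨z', hz'm, hz'n, hz'big⟩ := hcon (((n:ℝ) + 1) * 4 ^ n) (by positivity)
    set za : α → ℝ := fun a => |z' a| with hza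
    have hzam : za ∈ prodSet E F ∧ prodNorm E F za ≤ prodNorm E F z' :=
      prodNorm_mono E F hz'm (Filter.Eventually.of_forall fun a => by simp [hza])
    set zeta : α → ℝ := ((4:ℝ)⁻¹) ^ n • za with hzeta
    have h4 : (0:ℝ) < (4:ℝ)⁻¹ ^ n := by positivity
    have hzm : zeta ∈ prodSet E F := prodSet_smul E F _ hzam.1
    have hzn : prodNorm E F zeta ≤ (4:ℝ)⁻¹ ^ n := by
      rw [hzeta, prodNorm_smul E F _ h4]
      calc (4:ℝ)⁻¹ ^ n * prodNorm E F za ≤ (4:ℝ)⁻¹ ^ n * 1 :=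
        mul_le_mul_of_nonneg_left (le_trans hzam.2 hz'n) (le_of_lt h4)
      _ = (4:ℝ)⁻¹ ^ n := mul_one _
    have hxz' : x * z' ∈ prodSet E G := hx z' hz'm
    have hxza : x * za ∈ prodSet E G ∧ prodNorm E G (x * za) ≤ prodNorm E G (x * z') :=
      prodNorm_mono E G hxz' (Filter.Eventually.of_forall fun a => by
        simp [hza, Pi.mul_apply, abs_mul])
    have hxza' : prodNorm E G (x * z') ≤ prodNorm E G (x * za) :=
      (prodNorm_mono E G hxza.1 (Filter.Eventually.of_forall fun a => by
        simp [hza, Pi.mul_apply, abs_mul])).2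
    have hxzeta_eq : x * zeta = ((4:ℝ)⁻¹) ^ n • (x * za) := by
      funext a
      simp only [hzeta, Pi.mul_apply, Pi.smul_apply, smul_eq_mul]
      ring
    have hxzeta_mem : x * zeta ∈ prodSet E G := by
      rw [hxzeta_eq]; exact prodSet_smul E G _ hxza.1
    have hxzeta_big : ((n:ℝ) + 1) < prodNorm E G (x * zeta) := by
      rw [hxzeta_eq, prodNorm_smul E G _ h4]
      have h5 : ((n:ℝ) + 1) * 4 ^ n < prodNorm E G (x * za) :=
        lt_of_lt_of_le hz'big hxza'
      have h6 : ((4:ℝ)⁻¹) ^ n * (((n:ℝ) + 1) * 4 ^ n) < (4:ℝ)⁻¹ ^ n * prodNorm E G (x * za) :=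
        (mul_lt_mul_iff_right₀ h4).2 h5
      have h8 : ((4:ℝ)⁻¹) ^ n * (4:ℝ) ^ n = 1 := by
        rw [← mul_pow]; norm_num
      have h7 : ((4:ℝ)⁻¹) ^ n * (((n:ℝ) + 1) * 4 ^ n) = (n:ℝ) + 1 := by
        calc ((4:ℝ)⁻¹) ^ n * (((n:ℝ) + 1) * 4 ^ n)
            = ((n:ℝ) + 1) * (((4:ℝ)⁻¹) ^ n * (4:ℝ) ^ n) := by ring
        _ = (n:ℝ) + 1 := by rw [h8]; ring
      linarith
    have hzlt : prodNorm E F zeta < 2 * (4:ℝ)⁻¹ ^ n := lt_of_le_of_lt hzn (by nlinarith)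
    obtain ⟨e1, he1, f1, hf1, heq1, hlt1⟩ := prodNorm_exists_lt E F hzm hzlt
    have hzeta_pos : ∀ a, 0 ≤ zeta a := fun a => by
      simp only [hzeta, hza, Pi.smul_apply, smul_eq_mul]
      positivity
    by_cases hef : E.norm e1 = 0 ∨ F.norm f1 = 0
    · exfalso
      have hzz : zeta =ᵐ[μ] 0 := by
        rcases hef with h | h
        · have he10 : e1 =ᵐ[μ] 0 := (E.norm_eq_zero e1 he1).1 h
          filter_upwards [heq1, he10] with a h1 h2
          have h3 : e1 a = 0 := h2
          simp [h1, Pi.mul_apply, h3]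
        · have hf10 : f1 =ᵐ[μ] 0 := (F.norm_eq_zero f1 hf1).1 h
          filter_upwards [heq1, hf10] with a h1 h2
          have h3 : f1 a = 0 := h2
          simp [h1, Pi.mul_apply, h3]
      have hxz0 : x * zeta =ᵐ[μ] 0 := by
        filter_upwards [hzz] with a ha
        have h3 : zeta a = 0 := ha
        simp [Pi.mul_apply, h3]
      have h9 : prodNorm E G (x * zeta) = 0 := by
        rw [prodNorm_congr E G hxz0, prodNorm_zero]
      rw [h9] at hxzeta_big
      have h10 : (0:ℝ) ≤ (n:ℝ) := Nat.cast_nonneg n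
      linarith
    · push_neg at hef
      have he1p : 0 < E.norm e1 := lt_of_le_of_ne (E.norm_nonneg e1) (Ne.symm hef.1)
      have hf1p : 0 < F.norm f1 := lt_of_le_of_ne (F.norm_nonneg f1) (Ne.symm hef.2)
      set s : ℝ := 2 ^ n * F.norm f1 with hs
      have hsp : 0 < s := by positivity
      have hprod_eq : ∀ᵐ a ∂μ, ((fun a => |s * e1 a|) * fun a => |s⁻¹ * f1 a|) a = zeta a := by
        filter_upwards [heq1] with a ha
        have h1 : zeta a = e1 a * f1 a := ha
        simp only [Pi.mul_apply]
        rw [← abs_mul]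
        have hs0 : s ≠ 0 := ne_of_gt hsp
        have h2 : s * e1 a * (s⁻¹ * f1 a) = e1 a * f1 a := by
          field_simp
        rw [h2, ← h1, abs_of_nonneg (hzeta_pos a)]
      refine ⟨fun a => |s * e1 a|, E.abs_mem (E.smul_mem s he1),
        fun a => |s⁻¹ * f1 a|, F.abs_mem (F.smul_mem s⁻¹ hf1), fun a => abs_nonneg _,
        fun a => abs_nonneg _, ?_, ?_, ?_⟩
      · have h1 : E.norm (fun a => |s * e1 a|) = s * E.norm e1 := by
          rw [show (fun a => |s * e1 a|) = (fun a => |(s • e1) a|) from rfl,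
            E.norm_abs (E.smul_mem s he1), E.norm_smul, abs_of_pos hsp]
        rw [h1, hs]
        have h2 : (2:ℝ) ^ n * (2:ℝ)⁻¹ ^ n = 1 := by
          rw [← mul_pow]; norm_num
        have h3 : (2:ℝ) ^ n * ((4:ℝ)⁻¹) ^ n = (2:ℝ)⁻¹ ^ n := by
          rw [show ((4:ℝ))⁻¹ = (2:ℝ)⁻¹ * (2:ℝ)⁻¹ by norm_num, mul_pow, ← mul_assoc, h2, one_mul]
        have h4 := mul_le_mul_of_nonneg_left (le_of_lt hlt1)
          (pow_nonneg (by norm_num : (0:ℝ) ≤ 2) n)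
        have h6 : (2:ℝ) ^ n * F.norm f1 * E.norm e1 = 2 ^ n * (E.norm e1 * F.norm f1) := by
          ring
        rw [h6]
        calc (2:ℝ) ^ n * (E.norm e1 * F.norm f1) ≤ 2 ^ n * (2 * (4:ℝ)⁻¹ ^ n) := h4
        _ = 2 * ((2:ℝ) ^ n * ((4:ℝ)⁻¹) ^ n) := by ring
        _ = 2 * (2:ℝ)⁻¹ ^ n := by rw [h3]
      · have h1 : F.norm (fun a => |s⁻¹ * f1 a|) = s⁻¹ * F.norm f1 := by
          rw [show (fun a => |s⁻¹ * f1 a|) = (fun a => |(s⁻¹ • f1) a|) from rfl,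
            F.norm_abs (F.smul_mem s⁻¹ hf1), F.norm_smul, abs_of_pos (inv_pos.2 hsp)]
        rw [h1, hs, mul_inv]
        have h7 : (2 ^ n : ℝ)⁻¹ * (F.norm f1)⁻¹ * F.norm f1 = (2 ^ n : ℝ)⁻¹ := by
          rw [mul_assoc, inv_mul_cancel₀ (ne_of_gt hf1p), mul_one]
        rw [h7, inv_pow]
      · have h1 : prodNorm E G (x * ((fun a => |s * e1 a|) * fun a => |s⁻¹ * f1 a|))
            = prodNorm E G (x * zeta) := by
          refine prodNorm_congr E G ?_
          filter_upwards [hprod_eq] with a ha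
          simp only [Pi.mul_apply] at ha ⊢
          rw [ha]
        rw [h1]
        exact hxzeta_big
  -- now force a contradiction using Riesz–Fischer
  choose e he f hf hepos hfpos hen hfn hbig using hstep
  have hsumE : Summable fun n => E.norm (e n) := by
    refine Summable.of_nonneg_of_le (fun n => E.norm_nonneg _) hen ?_
    exact (summable_geometric_of_lt_one (by norm_num) (by norm_num)).mul_left 2
  have hsumF : Summable fun n => F.norm (f n) := by
    refine Summable.of_nonneg_of_le (fun n => F.norm_nonneg _) hfn ?_
    exact summable_geometric_of_lt_one (by norm_num) (by norm_num)
  obtain ⟨S, hS, hSae⟩ := E.rieszFischer e he hepos hsumE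
  obtain ⟨T, hT, hTae⟩ := F.rieszFischer f hf hfpos hsumF
  have hzmem : S * T ∈ prodSet E F := ⟨S, hS, T, hT, Filter.EventuallyEq.rfl⟩
  have hxz : x * (S * T) ∈ prodSet E G := hx _ hzmem
  have hdom : ∀ n, prodNorm E G (x * (e n * f n)) ≤ prodNorm E G (x * (S * T)) := by
    intro n
    refine (prodNorm_mono E G hxz ?_).2
    filter_upwards [hSae, hTae] with a h1 h2
    have hse : e n a ≤ S a := by
      have h3 := h1 (n + 1)
      have h4 : e n a ≤ ∑ k ∈ Finset.range (n + 1), e k a :=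
        Finset.single_le_sum (fun i _ => hepos i a) (Finset.self_mem_range_succ n)
      linarith
    have hsf : f n a ≤ T a := by
      have h3 := h2 (n + 1)
      have h4 : f n a ≤ ∑ k ∈ Finset.range (n + 1), f k a :=
        Finset.single_le_sum (fun i _ => hfpos i a) (Finset.self_mem_range_succ n)
      linarith
    have hS0 : 0 ≤ S a := by have := h1 0; simpa using this
    have hT0 : 0 ≤ T a := by have := h2 0; simpa using this
    simp only [Pi.mul_apply, abs_mul]
    have h5 : |e n a| = e n a := abs_of_nonneg (hepos n a)
    have h6 : |f n a| = f n a := abs_of_nonneg (hfpos n a)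
    have h7 : |S a| = S a := abs_of_nonneg hS0
    have h8 : |T a| = T a := abs_of_nonneg hT0
    rw [h5, h6, h7, h8]
    have h9 : e n a * f n a ≤ S a * T a := mul_le_mul hse hsf (hfpos n a) hS0
    exact mul_le_mul_of_nonneg_left h9 (abs_nonneg (x a))
  obtain ⟨m, hm⟩ := exists_nat_gt (prodNorm E G (x * (S * T)))
  have h10 := hbig m
  have h11 := hdom m
  linarith

/-- Key lemma: if multiplying all products `e * y` stays in `E ⊙ G` with the right bound,
then `x * y ∈ G` with norm at most `c`. -/
lemma key_lemma (hG : HasFatou G) (x y : α → ℝ) (hy : y ∈ F.carrier)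
    (c : ℝ) (hc : 0 ≤ c)
    (hyp : ∀ e ∈ E.carrier, x * (e * y) ∈ prodSet E G ∧
      prodNorm E G (x * (e * y)) ≤ c * E.norm e) :
    x * y ∈ G.carrier ∧ G.norm (x * y) ≤ c := by
  classical
  obtain ⟨w, hwmem, hwpos⟩ := E.weak_unit
  rcases eq_or_lt_of_le (E.norm_nonneg w) with hw0 | hwn
  · -- degenerate case : the a.e. filter is trivial
    have hwz : w =ᵐ[μ] 0 := (E.norm_eq_zero w hwmem).1 hw0.symm
    have hfalse : ∀ᵐ _a ∂μ, False := by
      filter_upwards [hwz, hwpos] with a h1 h2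
      have h3 : w a = 0 := h1
      rw [h3] at h2
      exact lt_irrefl 0 h2
    have hxy0 : x * y =ᵐ[μ] 0 := hfalse.mono fun a ha => ha.elim
    exact ⟨G.mem_of_ae_zero hxy0, by rw [G.norm_of_ae_zero hxy0]; exact hc⟩
  · set x' : α → ℝ := fun a => |x a| with hx'
    set y' : α → ℝ := fun a => |y a| with hy'def
    have hy' : y' ∈ F.carrier := F.abs_mem hy
    set e0 : α → ℝ := (E.norm w)⁻¹ • (fun a => |w a|) with he0
    have he0mem : e0 ∈ E.carrier := E.smul_mem _ (E.abs_mem hwmem)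
    have he0norm : E.norm e0 = 1 := by
      rw [he0, E.norm_smul, E.norm_abs hwmem, abs_of_pos (inv_pos.2 hwn),
        inv_mul_cancel₀ (ne_of_gt hwn)]
    have he0pos : ∀ a, 0 ≤ e0 a := fun a => by
      simp only [he0, Pi.smul_apply, smul_eq_mul]
      positivity
    have he0posae : ∀ᵐ a ∂μ, 0 < e0 a := by
      filter_upwards [hwpos] with a ha
      simp only [he0, Pi.smul_apply, smul_eq_mul]
      have h6 : 0 < |w a| := abs_pos.2 (ne_of_gt ha)
      exact mul_pos (inv_pos.2 hwn) h6
    -- hypothesis transported to the absolute values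
    have hyp' : ∀ e ∈ E.carrier, (∀ a, 0 ≤ e a) → (x' * (e * y') ∈ prodSet E G ∧
        prodNorm E G (x' * (e * y')) ≤ c * E.norm e) := by
      intro e he _hepos
      obtain ⟨hm, hb⟩ := hyp e he
      have habs : ∀ᵐ a ∂μ, |(x' * (e * y')) a| ≤ |(x * (e * y)) a| := by
        refine Filter.Eventually.of_forall fun a => ?_
        simp only [Pi.mul_apply, hx', hy'def, abs_mul, abs_abs]
        exact le_refl _
      obtain ⟨hm', hb'⟩ := prodNorm_mono E G hm habs
      exact ⟨hm', le_trans hb' hb⟩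
    -- main construction, for fixed ε and δ
    have crux : ∀ ε : ℝ, 0 < ε → ∀ δ : ℝ, 0 < δ → δ < 1 →
        (x' * y') ∈ G.carrier ∧ G.norm (x' * y') ≤ (1 - δ)⁻¹ * (c + ε) := by
      intro ε hε δ hδ0 hδ1
      have hcε : 0 < c + ε := by linarith
      set Inv : (α → ℝ) → Prop :=
        fun e => e ∈ E.carrier ∧ (∀ a, 0 ≤ e a) ∧ E.norm e ≤ 1 with hInv
      have hInv0 : Inv e0 := ⟨he0mem, he0pos, le_of_eq he0norm⟩
      have step : ∀ e : α → ℝ, Inv e → ∃ p : (α → ℝ) × (α → ℝ),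
          Inv p.1 ∧ (p.2 ∈ G.carrier ∧ (∀ a, 0 ≤ p.2 a) ∧ G.norm p.2 ≤ c + ε) ∧
          (x' * (e * y') =ᵐ[μ] p.1 * p.2) := by
        intro e heInv
        obtain ⟨hemem, hepos, henorm⟩ := heInv
        obtain ⟨hm, hb⟩ := hyp' e hemem hepos
        have hble : prodNorm E G (x' * (e * y')) < c + ε := by
          have h1 : c * E.norm e ≤ c * 1 := mul_le_mul_of_nonneg_left henorm hc
          rw [mul_one] at h1
          linarith [le_trans hb h1]
        obtain ⟨et, hetm, gt, hgtm, heqt, hltt⟩ := prodNorm_exists_lt E G hm hble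
        have hxey_pos : ∀ a, 0 ≤ (x' * (e * y')) a := fun a => by
          simp only [Pi.mul_apply, hx', hy'def]
          exact mul_nonneg (abs_nonneg _) (mul_nonneg (hepos a) (abs_nonneg _))
        by_cases het0 : E.norm et = 0
        · have hetz : et =ᵐ[μ] 0 := (E.norm_eq_zero et hetm).1 het0
          refine ⟨(e0, 0), hInv0, ⟨G.zero_mem, fun a => le_refl 0, ?_⟩, ?_⟩
          · rw [G.norm_zero]; linarith
          · filter_upwards [heqt, hetz] with a h1 h2
            have h3 : et a = 0 := h2
            have h4 : (x' * (e * y')) a = et a * gt a := h1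
            rw [h3, zero_mul] at h4
            show (x' * (e * y')) a = (e0 * (0 : α → ℝ)) a
            rw [h4]
            simp
        · have hetp : 0 < E.norm et := lt_of_le_of_ne (E.norm_nonneg et) (Ne.symm het0)
          refine ⟨((E.norm et)⁻¹ • (fun a => |et a|), (E.norm et) • (fun a => |gt a|)),
            ⟨E.smul_mem _ (E.abs_mem hetm), fun a => by
              simp only [Pi.smul_apply, smul_eq_mul]; positivity, ?_⟩,
            ⟨G.smul_mem _ (G.abs_mem hgtm), fun a => by
              simp only [Pi.smul_apply, smul_eq_mul]; positivity, ?_⟩, ?_⟩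
          · rw [E.norm_smul, E.norm_abs hetm, abs_of_pos (inv_pos.2 hetp),
              inv_mul_cancel₀ (ne_of_gt hetp)]
          · rw [G.norm_smul, G.norm_abs hgtm, abs_of_pos hetp]
            exact le_of_lt hltt
          · filter_upwards [heqt] with a ha
            have h4 : (x' * (e * y')) a = et a * gt a := ha
            simp only [Pi.mul_apply, Pi.smul_apply, smul_eq_mul]
            have h5 : (E.norm et)⁻¹ * |et a| * (E.norm et * |gt a|)
                = |et a| * |gt a| := by
              field_simp
            rw [h5, ← abs_mul, ← h4]
            rw [Pi.mul_apply] at h4 ⊢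
            exact (abs_of_nonneg (hxey_pos a)).symm
      -- construct the chain by recursion
      let T := {e : α → ℝ // Inv e}
      let step' : T → T × (α → ℝ) := fun t =>
        ⟨⟨(Classical.choose (step t.1 t.2)).1, (Classical.choose_spec (step t.1 t.2)).1⟩,
          (Classical.choose (step t.1 t.2)).2⟩
      let es : ℕ → T := fun n => Nat.rec ⟨e0, hInv0⟩ (fun _ ih => (step' ih).1) n
      let gs : ℕ → α → ℝ := fun n => (step' (es n)).2
      have hchain : ∀ n, x' * ((es n).1 * y') =ᵐ[μ] (es (n + 1)).1 * gs n := fun n =>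
        (Classical.choose_spec (step (es n).1 (es n).2)).2.2
      have hgmem : ∀ n, gs n ∈ G.carrier := fun n =>
        (Classical.choose_spec (step (es n).1 (es n).2)).2.1.1
      have hgpos : ∀ n a, 0 ≤ gs n a := fun n =>
        (Classical.choose_spec (step (es n).1 (es n).2)).2.1.2.1
      have hgnorm : ∀ n, G.norm (gs n) ≤ c + ε := fun n =>
        (Classical.choose_spec (step (es n).1 (es n).2)).2.1.2.2
      have hemem : ∀ n, (es n).1 ∈ E.carrier := fun n => (es n).2.1
      have hepos : ∀ n a, 0 ≤ (es n).1 a := fun n => (es n).2.2.1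
      have henorm : ∀ n, E.norm (es n).1 ≤ 1 := fun n => (es n).2.2.2
      have hes0 : (es 0).1 = e0 := rfl
      -- the product identity
      have hprod : ∀ᵐ a ∂μ, ∀ n, (x' a * y' a) ^ n * e0 a
          = (es n).1 a * ∏ i ∈ Finset.range n, gs i a := by
        have hall : ∀ᵐ a ∂μ, ∀ n, (x' * ((es n).1 * y')) a = ((es (n + 1)).1 * gs n) a :=
          MeasureTheory.ae_all_iff.2 fun n => (hchain n).mono fun a ha => ha
        filter_upwards [hall] with a ha
        intro n
        induction n with
        | zero => simp [hes0]
        | succ n ih =>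
          have h1 := ha n
          simp only [Pi.mul_apply] at h1
          rw [pow_succ, Finset.prod_range_succ]
          calc (x' a * y' a) ^ n * (x' a * y' a) * e0 a
              = (x' a * y' a) * ((x' a * y' a) ^ n * e0 a) := by ring
          _ = (x' a * y' a) * ((es n).1 a * ∏ i ∈ Finset.range n, gs i a) := by rw [ih]
          _ = (x' a * ((es n).1 a * y' a)) * ∏ i ∈ Finset.range n, gs i a := by ring
          _ = ((es (n + 1)).1 a * gs n a) * ∏ i ∈ Finset.range n, gs i a := by rw [h1]
          _ = (es (n + 1)).1 a * ((∏ i ∈ Finset.range n, gs i a) * gs n a) := by ring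
      -- Riesz–Fischer control of the e-sequence
      have hsum2 : Summable fun n : ℕ => (1:ℝ) / ((n:ℝ) + 1) ^ 2 := by
        have h1 : Summable (fun n : ℕ => (1:ℝ) / ((n:ℝ)) ^ 2) :=
          Real.summable_one_div_nat_pow.2 (by norm_num)
        have h2 := (summable_nat_add_iff 1).2 h1
        refine h2.congr fun n => ?_
        push_cast
        ring
      have hRF := E.rieszFischer (fun n => ((1:ℝ) / ((n:ℝ) + 1) ^ 2) • (es n).1)
        (fun n => E.smul_mem _ (hemem n))
        (fun n a => by
          simp only [Pi.smul_apply, smul_eq_mul]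
          have := hepos n a
          positivity)
        (by
          refine Summable.of_nonneg_of_le (fun n => E.norm_nonneg _) (fun n => ?_) hsum2
          rw [E.norm_smul]
          have h1 : |(1:ℝ) / ((n:ℝ) + 1) ^ 2| = (1:ℝ) / ((n:ℝ) + 1) ^ 2 :=
            abs_of_pos (by positivity)
          rw [h1]
          calc (1:ℝ) / ((n:ℝ) + 1) ^ 2 * E.norm (es n).1
              ≤ (1:ℝ) / ((n:ℝ) + 1) ^ 2 * 1 :=
            mul_le_mul_of_nonneg_left (henorm n) (by positivity)
          _ = (1:ℝ) / ((n:ℝ) + 1) ^ 2 := mul_one _)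
      obtain ⟨S, hSmem, hSae⟩ := hRF
      -- the averaged g-sequence
      set Gbar : ℕ → α → ℝ := fun n => ((n:ℝ))⁻¹ • (∑ i ∈ Finset.range n, gs i) with hGbar
      have hGbarmem : ∀ n, Gbar n ∈ G.carrier := fun n =>
        G.smul_mem _ (G.sum_mem gs hgmem _)
      have hGbarapp : ∀ n a, Gbar n a = ((n:ℝ))⁻¹ * ∑ i ∈ Finset.range n, gs i a := by
        intro n a
        simp [hGbar]
      have hGbarpos : ∀ n a, 0 ≤ Gbar n a := by
        intro n a
        rw [hGbarapp]
        refine mul_nonneg (by positivity) (Finset.sum_nonneg fun i _ => hgpos i a)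
      have hGbarnorm : ∀ n, G.norm (Gbar n) ≤ c + ε := by
        intro n
        rcases Nat.eq_zero_or_pos n with rfl | hn
        · have : Gbar 0 = 0 := by
            funext a
            rw [hGbarapp]
            simp
          rw [this, G.norm_zero]
          linarith
        · rw [hGbar]
          simp only
          rw [G.norm_smul]
          have h1 : |((n:ℝ))⁻¹| = ((n:ℝ))⁻¹ := abs_of_pos (by positivity)
          rw [h1]
          have h2 : G.norm (∑ i ∈ Finset.range n, gs i) ≤ (n:ℝ) * (c + ε) := by
            refine le_trans (G.norm_sum_le gs hgmem _) ?_
            calc ∑ i ∈ Finset.range n, G.norm (gs i) ≤ ∑ _i ∈ Finset.range n, (c + ε) :=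
              Finset.sum_le_sum fun i _ => hgnorm i
            _ = (n:ℝ) * (c + ε) := by
              rw [Finset.sum_const, Finset.card_range, nsmul_eq_mul]
          calc ((n:ℝ))⁻¹ * G.norm (∑ i ∈ Finset.range n, gs i)
              ≤ ((n:ℝ))⁻¹ * ((n:ℝ) * (c + ε)) :=
            mul_le_mul_of_nonneg_left h2 (by positivity)
          _ = c + ε := by
            field_simp
      -- the candidate sequence
      set u : ℕ → α → ℝ := fun n a => min (x' a * y' a) ((1 - δ)⁻¹ * Gbar n a) with hu
      have h1δ : 0 < 1 - δ := by linarith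
      have hupos : ∀ n a, 0 ≤ u n a := by
        intro n a
        rw [hu]
        simp only
        refine le_min ?_ ?_
        · simp only [hx', hy'def]; positivity
        · have := hGbarpos n a
          positivity
      have humem : ∀ n, u n ∈ G.carrier := by
        intro n
        refine G.ideal_mem (G.smul_mem ((1 - δ)⁻¹) (hGbarmem n)) ?_
        refine Filter.Eventually.of_forall fun a => ?_
        rw [abs_of_nonneg (hupos n a), Pi.smul_apply, smul_eq_mul]
        have h2 : (0:ℝ) ≤ (1 - δ)⁻¹ * Gbar n a := by
          have := hGbarpos n a
          positivity
        rw [abs_of_nonneg h2]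
        exact min_le_right _ _
      have hunorm : ∀ n, G.norm (u n) ≤ (1 - δ)⁻¹ * (c + ε) := by
        intro n
        have h3 : G.norm (u n) ≤ G.norm ((1 - δ)⁻¹ • Gbar n) := by
          refine G.ideal_norm (G.smul_mem ((1 - δ)⁻¹) (hGbarmem n)) ?_
          refine Filter.Eventually.of_forall fun a => ?_
          rw [abs_of_nonneg (hupos n a), Pi.smul_apply, smul_eq_mul]
          have h2 : (0:ℝ) ≤ (1 - δ)⁻¹ * Gbar n a := by
            have := hGbarpos n a
            positivity
          rw [abs_of_nonneg h2]
          exact min_le_right _ _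
        rw [G.norm_smul, abs_of_pos (inv_pos.2 h1δ)] at h3
        exact le_trans h3 (mul_le_mul_of_nonneg_left (hGbarnorm n) (le_of_lt (inv_pos.2 h1δ)))
      -- a.e. convergence of u to x'y'
      have hgeo : Filter.Tendsto (fun n : ℕ => ((n:ℝ) + 1) ^ 2 * (1 - δ) ^ n)
          Filter.atTop (nhds 0) := by
        have hr1 : ‖(1 - δ)‖ < 1 := by
          rw [Real.norm_eq_abs, abs_of_pos h1δ]
          linarith
        have hsumg := summable_pow_mul_geometric_of_norm_lt_one 2 hr1
        have hsumg2 := (summable_nat_add_iff 1).2 hsumg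
        have hsumg3 : Summable fun n : ℕ => ((n:ℝ) + 1) ^ 2 * (1 - δ) ^ n := by
          have h5 := hsumg2.mul_left ((1 - δ)⁻¹)
          refine h5.congr fun n => ?_
          push_cast
          rw [pow_succ]
          field_simp
          ring
        exact hsumg3.tendsto_atTop_zero
      have huconv : ∀ᵐ a ∂μ, Filter.Tendsto (fun n => u n a) Filter.atTop
          (nhds (x' a * y' a)) := by
        filter_upwards [hprod, hSae, he0posae] with a hpa hSa he0a
        have hSpos : 0 < S a := by
          have h1 := hSa 1
          rw [Finset.sum_range_one] at h1
          have h2 : (((1:ℝ) / (((0:ℕ):ℝ) + 1) ^ 2) • (es 0).1) a = e0 a := by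
            rw [Pi.smul_apply, smul_eq_mul, hes0]
            norm_num
          rw [h2] at h1
          linarith
        have hedom : ∀ n : ℕ, (es n).1 a ≤ ((n:ℝ) + 1) ^ 2 * S a := by
          intro n
          have h1 := hSa (n + 1)
          have h2 : (((1:ℝ) / ((n:ℝ) + 1) ^ 2) • (es n).1) a
              ≤ ∑ k ∈ Finset.range (n + 1), (((1:ℝ) / ((k:ℝ) + 1) ^ 2) • (es k).1) a := by
            refine Finset.single_le_sum (f := fun k : ℕ => (((1:ℝ) / ((k:ℝ) + 1) ^ 2) • (es k).1) a)
              (fun i _ => ?_) (Finset.self_mem_range_succ n)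
            simp only [Pi.smul_apply, smul_eq_mul]
            have h9 := hepos i a
            positivity
          have h3 : (((1:ℝ) / ((n:ℝ) + 1) ^ 2) • (es n).1) a ≤ S a := le_trans h2 h1
          rw [Pi.smul_apply, smul_eq_mul] at h3
          have h4 : (0:ℝ) < ((n:ℝ) + 1) ^ 2 := by positivity
          have h10 : (es n).1 a = ((n:ℝ) + 1) ^ 2 * ((1:ℝ) / ((n:ℝ) + 1) ^ 2 * (es n).1 a) := by
            rw [← mul_assoc, mul_one_div, div_self (ne_of_gt h4), one_mul]
          rw [h10]
          exact mul_le_mul_of_nonneg_left h3 (le_of_lt h4)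
        set s0 : ℝ := x' a * y' a with hs0def
        have hs0nn : 0 ≤ s0 := by
          rw [hs0def]
          simp only [hx', hy'def]
          positivity
        rcases eq_or_lt_of_le hs0nn with hs00 | hs0p
        · have hall0 : ∀ n, u n a = s0 := by
            intro n
            rw [hu]
            simp only
            rw [← hs0def, ← hs00]
            exact min_eq_left (mul_nonneg (le_of_lt (inv_pos.2 h1δ)) (hGbarpos n a))
          have : (fun n => u n a) = fun _ => s0 := funext hall0
          rw [this]
          exact tendsto_const_nhds
        · -- positive case: eventually u n a = s0
          have hev : ∀ᶠ n in Filter.atTop, u n a = s0 := by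
            have hrt : 0 < e0 a / S a := div_pos he0a hSpos
            have hev1 : ∀ᶠ n : ℕ in Filter.atTop,
                ((n:ℝ) + 1) ^ 2 * (1 - δ) ^ n < e0 a / S a :=
              hgeo.eventually (gt_mem_nhds hrt)
            filter_upwards [hev1, Filter.eventually_ge_atTop 1] with n hn1 hn2
            -- show Gbar n a ≥ (1 - δ) * s0
            have hnR : (0:ℝ) < (n:ℝ) := by exact_mod_cast hn2
            have hGb : (1 - δ) * s0 ≤ Gbar n a := by
              by_contra hlt
              push_neg at hlt
              have hamgm := Real.geom_mean_le_arith_mean_weighted (Finset.range n)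
                (fun _ => ((n:ℝ))⁻¹) (fun i => gs i a)
                (fun i _ => le_of_lt (inv_pos.2 hnR))
                (by
                  rw [Finset.sum_const, Finset.card_range, nsmul_eq_mul]
                  field_simp)
                (fun i _ => hgpos i a)
              have hsumeq : ∑ i ∈ Finset.range n, ((n:ℝ))⁻¹ * gs i a = Gbar n a := by
                rw [hGbarapp, Finset.mul_sum]
              have hprodpow : (∏ i ∈ Finset.range n, (gs i a) ^ (((n:ℝ))⁻¹)) ^ n
                  = ∏ i ∈ Finset.range n, gs i a := by
                rw [← Finset.prod_pow]
                refine Finset.prod_congr rfl fun i _ => ?_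
                rw [← Real.rpow_natCast ((gs i a) ^ (((n:ℝ))⁻¹)) n,
                  ← Real.rpow_mul (hgpos i a), inv_mul_cancel₀ (ne_of_gt hnR),
                  Real.rpow_one]
              have hkey : ∏ i ∈ Finset.range n, gs i a ≤ (Gbar n a) ^ n := by
                rw [← hprodpow]
                refine pow_le_pow_left₀ ?_ (le_trans hamgm (le_of_eq hsumeq)) n
                exact Finset.prod_nonneg fun i _ =>
                  Real.rpow_nonneg (hgpos i a) _
              have hch := hpa n
              have hstep1 : (es n).1 a * ∏ i ∈ Finset.range n, gs i a
                  ≤ (((n:ℝ) + 1) ^ 2 * S a) * (Gbar n a) ^ n := by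
                refine mul_le_mul (hedom n) hkey
                  (Finset.prod_nonneg fun i _ => hgpos i a) ?_
                positivity
              have hstep2 : (Gbar n a) ^ n ≤ ((1 - δ) * s0) ^ n :=
                pow_le_pow_left₀ (hGbarpos n a) (le_of_lt hlt) n
              have hstep3 : s0 ^ n * e0 a
                  ≤ (((n:ℝ) + 1) ^ 2 * S a) * ((1 - δ) ^ n * s0 ^ n) := by
                rw [hch]
                calc (es n).1 a * ∏ i ∈ Finset.range n, gs i a
                    ≤ (((n:ℝ) + 1) ^ 2 * S a) * (Gbar n a) ^ n := hstep1
                _ ≤ (((n:ℝ) + 1) ^ 2 * S a) * ((1 - δ) * s0) ^ n := by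
                  refine mul_le_mul_of_nonneg_left hstep2 ?_
                  positivity
                _ = (((n:ℝ) + 1) ^ 2 * S a) * ((1 - δ) ^ n * s0 ^ n) := by
                  rw [mul_pow]
              have hs0pow : (0:ℝ) < s0 ^ n := pow_pos hs0p n
              have hstep4 : e0 a ≤ ((n:ℝ) + 1) ^ 2 * S a * (1 - δ) ^ n := by
                have h5 : e0 a * s0 ^ n ≤ (((n:ℝ) + 1) ^ 2 * S a * (1 - δ) ^ n) * s0 ^ n := by
                  calc e0 a * s0 ^ n = s0 ^ n * e0 a := by ring
                  _ ≤ (((n:ℝ) + 1) ^ 2 * S a) * ((1 - δ) ^ n * s0 ^ n) := hstep3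
                  _ = (((n:ℝ) + 1) ^ 2 * S a * (1 - δ) ^ n) * s0 ^ n := by ring
                exact le_of_mul_le_mul_right h5 hs0pow
              have hstep5 : ((n:ℝ) + 1) ^ 2 * S a * (1 - δ) ^ n < e0 a := by
                have h6 : ((n:ℝ) + 1) ^ 2 * (1 - δ) ^ n * S a < (e0 a / S a) * S a :=
                  (mul_lt_mul_iff_left₀ hSpos).2 hn1
                rw [div_mul_cancel₀ _ (ne_of_gt hSpos)] at h6
                calc ((n:ℝ) + 1) ^ 2 * S a * (1 - δ) ^ n
                    = ((n:ℝ) + 1) ^ 2 * (1 - δ) ^ n * S a := by ring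
                _ < e0 a := h6
              linarith
            rw [hu]
            simp only
            rw [← hs0def]
            refine min_eq_left ?_
            have h11 : s0 = (1 - δ)⁻¹ * ((1 - δ) * s0) := by
              rw [← mul_assoc, inv_mul_cancel₀ (ne_of_gt h1δ), one_mul]
            rw [h11]
            exact mul_le_mul_of_nonneg_left hGb (le_of_lt (inv_pos.2 h1δ))
          exact Filter.Tendsto.congr' (hev.mono fun n h => h.symm) tendsto_const_nhds
      exact fatou_limit G hG u (x' * y') ((1 - δ)⁻¹ * (c + ε)) humem hupos huconv hunorm
    -- conclude from crux
    have hmem0 := (crux 1 one_pos (1/2) (by norm_num) (by norm_num)).1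
    have hdom0 : ∀ᵐ a ∂μ, |(x * y) a| ≤ |(x' * y') a| :=
      Filter.Eventually.of_forall fun a => by
        simp [Pi.mul_apply, hx', hy'def, abs_mul]
    have hxymem : x * y ∈ G.carrier := G.ideal_mem hmem0 hdom0
    refine ⟨hxymem, ?_⟩
    refine le_of_forall_pos_le_add fun ε' hε' => ?_
    have hcε' : 0 < c + ε' := by linarith
    set δ := (ε' / 2) / (c + ε') with hδdef
    have hδ0 : 0 < δ := div_pos (by linarith) hcε'
    have hδ1 : δ < 1 := by
      rw [hδdef, div_lt_one hcε']
      linarith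
    have h2 := (crux (ε' / 2) (by linarith) δ hδ0 hδ1).2
    have h3 : G.norm (x * y) ≤ G.norm (x' * y') := G.ideal_norm hmem0 hdom0
    have h4 : (1 - δ)⁻¹ * (c + ε' / 2) = c + ε' := by
      rw [hδdef]
      rw [show 1 - ε' / 2 / (c + ε') = (c + ε' / 2) / (c + ε') by field_simp; ring]
      rw [inv_div]
      field_simp
    linarith

/-- From a bound on the product-space multiplier norm, deduce membership and bound in M(F,G). -/
lemma bound_to_mult (hG : HasFatou G) (x : α → ℝ) (c : ℝ) (hc : 0 ≤ c)
    (hbd : ∀ z ∈ prodSet E F, prodNorm E F z ≤ 1 → prodNorm E G (x * z) ≤ c) :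
    ∀ y ∈ F.carrier, x * y ∈ G.carrier ∧ G.norm (x * y) ≤ c * F.norm y := by
  intro y hy
  have hscale := bound_scale E F G x c hc hbd
  obtain ⟨v, hvmem, hvpos⟩ := G.weak_unit
  -- each truncated product satisfies the hypothesis of the key lemma
  have htr : ∀ n, x * trunc x y v n ∈ G.carrier ∧
      G.norm (x * trunc x y v n) ≤ c * F.norm y := by
    intro n
    have hyn : trunc x y v n ∈ F.carrier := trunc_mem_F x y v hy n
    have hynle : F.norm (trunc x y v n) ≤ F.norm y := trunc_norm_le x y v hy n
    have hkey := key_lemma E F G hG x (trunc x y v n) hyn (c * F.norm y)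
      (mul_nonneg hc (F.norm_nonneg y)) ?_
    · exact hkey
    · intro e he
      have hmemn : x * trunc x y v n ∈ G.carrier := trunc_mul_mem_G x y v hvmem n
      have heq : x * (e * trunc x y v n) = e * (x * trunc x y v n) := by
        funext a
        simp only [Pi.mul_apply]
        ring
      have hm : x * (e * trunc x y v n) ∈ prodSet E G := by
        rw [heq]
        exact ⟨e, he, x * trunc x y v n, hmemn, Filter.EventuallyEq.rfl⟩
      refine ⟨hm, ?_⟩
      have h1 : e * trunc x y v n ∈ prodSet E F :=
        ⟨e, he, trunc x y v n, hyn, Filter.EventuallyEq.rfl⟩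
      have h2 := hscale _ h1
      have h3 : prodNorm E F (e * trunc x y v n) ≤ E.norm e * F.norm (trunc x y v n) :=
        prodNorm_le E F he hyn Filter.EventuallyEq.rfl
      calc prodNorm E G (x * (e * trunc x y v n))
          ≤ c * prodNorm E F (e * trunc x y v n) := h2
      _ ≤ c * (E.norm e * F.norm (trunc x y v n)) :=
        mul_le_mul_of_nonneg_left h3 hc
      _ ≤ c * (E.norm e * F.norm y) := by
        refine mul_le_mul_of_nonneg_left ?_ hc
        exact mul_le_mul_of_nonneg_left hynle (E.norm_nonneg e)
      _ = c * F.norm y * E.norm e := by ring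
  exact trunc_glue G hG x y v hvmem hvpos (c * F.norm y) fun n => (htr n).2

/-- From a bound on the M(F,G) multiplier norm, deduce membership and bound. -/
lemma mult_bound_package (hG : HasFatou G) (x : α → ℝ) (c : ℝ) (hc : 0 ≤ c)
    (hbd : ∀ y ∈ F.carrier, F.norm y ≤ 1 → G.norm (x * y) ≤ c) :
    ∀ y ∈ F.carrier, x * y ∈ G.carrier ∧ G.norm (x * y) ≤ c * F.norm y := by
  have hq : ∀ y ∈ F.carrier, G.norm (x * y) ≤ c * F.norm y := by
    intro y hy
    rcases eq_or_lt_of_le (F.norm_nonneg y) with h0 | hpos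
    · have hy0 : y =ᵐ[μ] 0 := (F.norm_eq_zero y hy).1 h0.symm
      have hxy0 : x * y =ᵐ[μ] 0 := by
        filter_upwards [hy0] with a ha
        have h1 : y a = 0 := ha
        simp [Pi.mul_apply, h1]
      rw [G.norm_of_ae_zero hxy0]
      exact mul_nonneg hc (F.norm_nonneg y)
    · set u : α → ℝ := (F.norm y)⁻¹ • y with hu
      have hum : u ∈ F.carrier := F.smul_mem _ hy
      have hun : F.norm u = 1 := by
        rw [hu, F.norm_smul, abs_of_pos (inv_pos.2 hpos), inv_mul_cancel₀ (ne_of_gt hpos)]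
      have h1 := hbd u hum (le_of_eq hun)
      have h2 : x * u = (F.norm y)⁻¹ • (x * y) := by
        funext a
        simp only [hu, Pi.mul_apply, Pi.smul_apply, smul_eq_mul]
        ring
      rw [h2, G.norm_smul, abs_of_pos (inv_pos.2 hpos)] at h1
      have h3 : G.norm (x * y) = F.norm y * ((F.norm y)⁻¹ * G.norm (x * y)) := by
        rw [← mul_assoc, mul_inv_cancel₀ (ne_of_gt hpos), one_mul]
      rw [h3]
      calc F.norm y * ((F.norm y)⁻¹ * G.norm (x * y)) ≤ F.norm y * c :=
        mul_le_mul_of_nonneg_left h1 (le_of_lt hpos)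
      _ = c * F.norm y := by ring
  intro y hy
  obtain ⟨v, hvmem, hvpos⟩ := G.weak_unit
  refine trunc_glue G hG x y v hvmem hvpos (c * F.norm y) fun n => ?_
  have h4 : G.norm (x * trunc x y v n) ≤ c * F.norm (trunc x y v n) :=
    hq _ (trunc_mem_F x y v hy n)
  have h5 : c * F.norm (trunc x y v n) ≤ c * F.norm y :=
    mul_le_mul_of_nonneg_left (trunc_norm_le x y v hy n) hc
  exact le_trans h4 h5

/-- Easy inclusion: a multiplier from F to G is a multiplier of the product spaces. -/
lemma mult_easy (x : α → ℝ) (hx : x ∈ multSet F.carrier G.carrier) :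
    x ∈ multSet (prodSet E F) (prodSet E G) := by
  rintro z ⟨e, he, u, hu, hz⟩
  refine ⟨e, he, x * u, hx u hu, ?_⟩
  filter_upwards [hz] with a ha
  simp only [Pi.mul_apply] at ha ⊢
  rw [ha]
  ring

/-- If every `G`-norm value on the unit ball of `F` is at most `c`, then every
product-space value is at most `c`. -/
lemma ub_transfer (hG : HasFatou G) (x : α → ℝ) (c : ℝ) (hc : 0 ≤ c)
    (hbd : ∀ y ∈ F.carrier, F.norm y ≤ 1 → G.norm (x * y) ≤ c) :
    ∀ z ∈ prodSet E F, prodNorm E F z ≤ 1 → prodNorm E G (x * z) ≤ c := by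
  have hpk := mult_bound_package F G hG x c hc hbd
  intro z hz hz1
  have key : ∀ r ∈ {r | ∃ e ∈ E.carrier, ∃ u ∈ F.carrier, z =ᵐ[μ] e * u ∧
      r = E.norm e * F.norm u}, prodNorm E G (x * z) ≤ c * r := by
    rintro r ⟨e, he, u, hu, hz2, rfl⟩
    obtain ⟨hmu, hnu⟩ := hpk u hu
    have hfac : x * z =ᵐ[μ] e * (x * u) := by
      filter_upwards [hz2] with a ha
      simp only [Pi.mul_apply] at ha ⊢
      rw [ha]
      ring
    calc prodNorm E G (x * z) ≤ E.norm e * G.norm (x * u) := prodNorm_le E G he hmu hfac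
    _ ≤ E.norm e * (c * F.norm u) := mul_le_mul_of_nonneg_left hnu (E.norm_nonneg e)
    _ = c * (E.norm e * F.norm u) := by ring
  have hne : {r | ∃ e ∈ E.carrier, ∃ u ∈ F.carrier, z =ᵐ[μ] e * u ∧
      r = E.norm e * F.norm u}.Nonempty := by
    rcases hz with ⟨e, he, u, hu, hz2⟩
    exact ⟨_, e, he, u, hu, hz2, rfl⟩
  have h1 : prodNorm E G (x * z) ≤ c * prodNorm E F z := le_mul_csInf hne hc key
  calc prodNorm E G (x * z) ≤ c * prodNorm E F z := h1
  _ ≤ c * 1 := mul_le_mul_of_nonneg_left hz1 hc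
  _ = c := mul_one c

end ProdLemmas

lemma csSup_eq_csSup_of_ub {L R : Set ℝ} (hL : L.Nonempty) (hR : R.Nonempty)
    (h : upperBounds L = upperBounds R) : sSup L = sSup R := by
  rcases em (BddAbove L) with hB | hB
  · have hBR : BddAbove R := by
      unfold BddAbove
      rw [← h]
      exact hB
    refine le_antisymm (csSup_le hL fun r hr => ?_) (csSup_le hR fun r hr => ?_)
    · have h2 : sSup R ∈ upperBounds L := by
        rw [h]
        exact fun t ht => le_csSup hBR ht
      exact h2 hr
    · have h2 : sSup L ∈ upperBounds R := by
        rw [← h]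
        exact fun t ht => le_csSup hB ht
      exact h2 hr
  · have hBR : ¬ BddAbove R := by
      unfold BddAbove
      rw [← h]
      exact hB
    rw [Real.sSup_of_not_bddAbove hB, Real.sSup_of_not_bddAbove hBR]

end CancelAux

/-- Theorem 4 (cancellation): if G has the Fatou property, then
M(E ⊙ F, E ⊙ G) ≡ M(F, G) isometrically. -/
theorem multiplier_cancellation (E F G : IdealSpace μ) (hG : HasFatou G) (x : α → ℝ) :
    (x ∈ multSet (prodSet E F) (prodSet E G) ↔ x ∈ multSet F.carrier G.carrier) ∧
    multNorm (prodSet E F) (prodNorm E F) (prodNorm E G) x =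
      multNorm F.carrier F.norm G.norm x := by
  classical
  constructor
  · constructor
    · intro hx
      obtain ⟨c, hc, hbd⟩ := CancelAux.exists_bound E F G x hx
      intro y hy
      exact (CancelAux.bound_to_mult E F G hG x c hc hbd y hy).1
    · intro hx
      exact CancelAux.mult_easy E F G x hx
  · unfold multNorm
    have hx0 : x * (0 : α → ℝ) = 0 := by
      funext a
      simp
    have h0L : (0:ℝ) ∈ {r | ∃ y ∈ prodSet E F, prodNorm E F y ≤ 1 ∧ r = prodNorm E G (x * y)} := by
      refine ⟨0, CancelAux.prodSet_zero_mem E F, ?_, ?_⟩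
      · rw [CancelAux.prodNorm_zero E F]
        norm_num
      · rw [hx0, CancelAux.prodNorm_zero E G]
    have h0R : (0:ℝ) ∈ {r | ∃ y ∈ F.carrier, F.norm y ≤ 1 ∧ r = G.norm (x * y)} := by
      refine ⟨0, F.zero_mem, ?_, ?_⟩
      · rw [F.norm_zero]
        norm_num
      · rw [hx0, G.norm_zero]
    refine CancelAux.csSup_eq_csSup_of_ub ⟨0, h0L⟩ ⟨0, h0R⟩ ?_
    ext c
    simp only [upperBounds, Set.mem_setOf_eq]
    constructor
    · intro hLc
      have hc : 0 ≤ c := hLc h0L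
      have hbd : ∀ z ∈ prodSet E F, prodNorm E F z ≤ 1 → prodNorm E G (x * z) ≤ c := by
        intro z hz h1
        exact hLc ⟨z, hz, h1, rfl⟩
      have hpk := CancelAux.bound_to_mult E F G hG x c hc hbd
      rintro r ⟨y, hy, hy1, rfl⟩
      have h2 := (hpk y hy).2
      calc G.norm (x * y) ≤ c * F.norm y := h2
      _ ≤ c * 1 := mul_le_mul_of_nonneg_left hy1 hc
      _ = c := mul_one c
    · intro hRc
      have hc : 0 ≤ c := hRc h0R
      have hbd : ∀ y ∈ F.carrier, F.norm y ≤ 1 → G.norm (x * y) ≤ c :=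
        fun y hy h1 => hRc ⟨y, hy, h1, rfl⟩
      have htr := CancelAux.ub_transfer E F G hG x c hc hbd
      rintro r ⟨z, hz, hz1, rfl⟩
      exact htr z hz hz1
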